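/- For each n ≥ 2 and k ≥ 1, the n-form vol^×_{(ℝⁿ)^k} = Σ_{i=1}^k π_i* vol_{ℝⁿ} on (ℝⁿ)^k has comass norm exactly 1; that is, for every linear map L = (L_1,...,L_k) : ℝⁿ → (ℝⁿ)^k with |L(e_j)| ≤ 1 for all j, one has Σ_{i=1}^k det L_i ≤ 1, and this bound is attained. -/

import Mathlib

open Finset Matrix

/-- AM-GM: nonnegative reals summing to at most `m` have product at most `1`. -/
lemma amgm_prod_le_one {m : ℕ} (hm : 0 < m) (z : Fin m → ℝ) (hz : ∀ i, 0 ≤ z i)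
    (hsum : ∑ i, z i ≤ m) : ∏ i, z i ≤ 1 := by
  have hw : (∑ _i : Fin m, (1 : ℝ)) = m := by simp
  have h := Real.geom_mean_le_arith_mean Finset.univ (fun _ => (1 : ℝ)) z
    (fun _ _ => zero_le_one) (by rw [hw]; exact_mod_cast hm) (fun i _ => hz i)
  rw [hw] at h
  simp only [Real.rpow_one, one_mul] at h
  have h2 : (∑ i, z i) / m ≤ 1 := by
    rw [div_le_one (by exact_mod_cast hm)]; exact hsum
  have h3 : (∏ i, z i) ^ ((m : ℝ)⁻¹) ≤ 1 := h.trans h2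
  by_contra hlt
  push_neg at hlt
  have hpos : (0:ℝ) < (m : ℝ)⁻¹ := by positivity
  have hx : (0:ℝ) < ∏ i, z i := lt_trans one_pos hlt
  have : 1 < (∏ i, z i) ^ ((m : ℝ)⁻¹) :=
    (Real.one_lt_rpow_iff_of_pos hx).mpr (Or.inl ⟨hlt, hpos⟩)
  linarith

/-- If every column of a real square matrix has squared norm at most 1,
then `|det| ≤ 1`. -/
lemma abs_det_le_one_of_cols {m : ℕ} (B : Matrix (Fin m) (Fin m) ℝ)
    (hcol : ∀ j, ∑ i, B i j ^ 2 ≤ 1) : |B.det| ≤ 1 := by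
  rcases Nat.eq_zero_or_pos m with hm | hm
  · subst hm; simp [Matrix.det_isEmpty]
  set G := B.conjTranspose * B with hGdef
  have hG : G.PosSemidef := Matrix.posSemidef_conjTranspose_mul_self B
  have hH : G.IsHermitian := hG.1
  have hdet : G.det = ∏ i, hH.eigenvalues i := by
    simpa using hH.det_eq_prod_eigenvalues
  have htr : G.trace = ∑ i, hH.eigenvalues i := by
    conv_lhs => rw [hH.spectral_theorem]
    rw [Unitary.conjStarAlgAut_apply]
    rw [Matrix.trace_mul_cycle]
    rw [show star (hH.eigenvectorUnitary : Matrix (Fin m) (Fin m) ℝ) *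
        (hH.eigenvectorUnitary : Matrix (Fin m) (Fin m) ℝ) = 1 from
      Unitary.coe_star_mul_self hH.eigenvectorUnitary, one_mul]
    simp [Matrix.trace_diagonal]
  have htrle : G.trace ≤ (m : ℝ) := by
    have hGt : G.trace = ∑ j, ∑ i, B i j ^ 2 := by
      simp [Matrix.trace, hGdef, Matrix.diag, Matrix.mul_apply, Matrix.conjTranspose_apply, sq]
    rw [hGt]
    calc ∑ j : Fin m, ∑ i, B i j ^ 2 ≤ ∑ _j : Fin m, (1:ℝ) :=
          Finset.sum_le_sum fun j _ => hcol j
      _ = m := by simp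
  have hprod : ∏ i, hH.eigenvalues i ≤ 1 :=
    amgm_prod_le_one hm _ (fun i => hG.eigenvalues_nonneg i) (by rw [← htr]; exact htrle)
  have hdetsq : B.det ^ 2 ≤ 1 := by
    have hsq : G.det = B.det ^ 2 := by
      rw [hGdef, Matrix.det_mul, Matrix.det_conjTranspose, sq]
      simp
    rw [← hsq, hdet]; exact hprod
  nlinarith [abs_nonneg B.det, sq_abs B.det]

/-- Hadamard's inequality: `|det B| ≤ ∏ⱼ ‖column j‖`. -/
lemma abs_det_le_prod_col_norms {m : ℕ} (B : Matrix (Fin m) (Fin m) ℝ) :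
    |B.det| ≤ ∏ j, Real.sqrt (∑ i, B i j ^ 2) := by
  by_cases hc : ∀ j, 0 < ∑ i, B i j ^ 2
  · set c : Fin m → ℝ := fun j => Real.sqrt (∑ i, B i j ^ 2) with hcdef
    have hcpos : ∀ j, 0 < c j := fun j => Real.sqrt_pos.mpr (hc j)
    set D : Matrix (Fin m) (Fin m) ℝ := Matrix.of fun i j => B i j / c j with hDdef
    have hBD : B = D * Matrix.diagonal c := by
      ext i j
      rw [Matrix.mul_diagonal]
      simp [hDdef, div_mul_cancel₀ _ (hcpos j).ne']
    have hDcol : ∀ j, ∑ i, D i j ^ 2 ≤ 1 := by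
      intro j
      have hcalc : ∑ i, D i j ^ 2 = (∑ i, B i j ^ 2) / c j ^ 2 := by
        simp [hDdef, div_pow, Finset.sum_div]
      rw [hcalc, hcdef, Real.sq_sqrt (le_of_lt (hc j)), div_self (hc j).ne']
    have hD := abs_det_le_one_of_cols D hDcol
    calc |B.det| = |D.det| * ∏ j, c j := by
          rw [hBD, Matrix.det_mul, Matrix.det_diagonal, abs_mul,
            abs_of_nonneg (Finset.prod_nonneg fun j _ => (hcpos j).le)]
      _ ≤ 1 * ∏ j, c j :=
          mul_le_mul_of_nonneg_right hD (Finset.prod_nonneg fun j _ => (hcpos j).le)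
      _ = ∏ j, c j := one_mul _
  · push_neg at hc
    obtain ⟨j, hj⟩ := hc
    have hzero : ∀ i, B i j = 0 := by
      intro i
      have h0 : ∑ i, B i j ^ 2 = 0 :=
        le_antisymm hj (Finset.sum_nonneg fun i _ => sq_nonneg _)
      have := (Finset.sum_eq_zero_iff_of_nonneg (fun i _ => sq_nonneg (B i j))).mp h0 i
        (Finset.mem_univ i)
      exact pow_eq_zero_iff (n := 2) (by norm_num) |>.mp this
    have hd : B.det = 0 := Matrix.det_eq_zero_of_column_eq_zero j hzero
    rw [hd, abs_zero]
    exact Finset.prod_nonneg fun j _ => Real.sqrt_nonneg _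

/-- For `n ≥ 2` and `k ≥ 1`, the comass norm of `vol^×_{(ℝⁿ)^k}` is exactly `1`: the greatest
value of `∑ᵢ det Lᵢ` over linear maps `L = (L₁,…,L_k) : ℝⁿ → (ℝⁿ)^k` with `|L(eⱼ)| ≤ 1` for all
`j` is `1`. -/
theorem comass_vol_times (n k : ℕ) (hn : 2 ≤ n) (hk : 1 ≤ k) :
    IsGreatest {r : ℝ |
      ∃ (L : EuclideanSpace ℝ (Fin n) →L[ℝ]
            PiLp 2 (fun _ : Fin k => EuclideanSpace ℝ (Fin n)))
        (Li : Fin k → (EuclideanSpace ℝ (Fin n) →ₗ[ℝ] EuclideanSpace ℝ (Fin n))),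
        (∀ i v, Li i v = L v i) ∧
        (∀ j : Fin n, ‖L (EuclideanSpace.single j 1)‖ ≤ 1) ∧
        r = ∑ i, LinearMap.det (Li i)} 1 := by
  classical
  have hn0 : 0 < n := by omega
  constructor
  · -- membership: the bound is attained
    set i0 : Fin k := ⟨0, hk⟩ with hi0
    set F : ∀ _ : Fin k, EuclideanSpace ℝ (Fin n) →L[ℝ] EuclideanSpace ℝ (Fin n) :=
      fun i => if i = i0 then ContinuousLinearMap.id ℝ _ else 0 with hF
    set L0 : EuclideanSpace ℝ (Fin n) →L[ℝ]
        PiLp 2 (fun _ : Fin k => EuclideanSpace ℝ (Fin n)) :=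
      (PiLp.continuousLinearEquiv 2 ℝ
        (fun _ : Fin k => EuclideanSpace ℝ (Fin n))).symm.toContinuousLinearMap.comp
        (ContinuousLinearMap.pi F) with hL0
    have hLapp : ∀ (v : EuclideanSpace ℝ (Fin n)) (i : Fin k), (L0 v) i = F i v :=
      fun v i => rfl
    refine ⟨L0, fun i => if i = i0 then LinearMap.id else 0, ?_, ?_, ?_⟩
    · intro i v
      rw [hLapp]
      by_cases h : i = i0 <;> simp [h, hF]
    · intro j
      have hnrm : ‖L0 (EuclideanSpace.single j 1)‖
          = Real.sqrt (∑ i : Fin k, ‖(L0 (EuclideanSpace.single j 1)) i‖ ^ 2) :=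
        PiLp.norm_eq_of_L2 _
      rw [hnrm]
      have hsum : (∑ i : Fin k, ‖(L0 (EuclideanSpace.single j 1)) i‖ ^ 2) = 1 := by
        have hterm : ∀ i : Fin k, ‖(L0 (EuclideanSpace.single j 1)) i‖ ^ 2
            = if i = i0 then 1 else 0 := by
          intro i
          rw [hLapp]
          by_cases h : i = i0 <;> simp [h, hF, EuclideanSpace.norm_single]
        rw [Finset.sum_congr rfl fun i _ => hterm i]
        simp
      rw [hsum, Real.sqrt_one]
    · have hdet : ∀ i : Fin k,
          LinearMap.det (if i = i0 then (LinearMap.id :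
            EuclideanSpace ℝ (Fin n) →ₗ[ℝ] EuclideanSpace ℝ (Fin n)) else 0)
          = if i = i0 then (1:ℝ) else 0 := by
        intro i
        by_cases h : i = i0
        · simp [h]
        · rw [if_neg h, if_neg h, LinearMap.det_zero]
          rw [finrank_euclideanSpace]
          simp [hn0.ne']
      rw [Finset.sum_congr rfl fun i _ => hdet i]
      simp
  · -- upper bound
    rintro r ⟨L, Li, hLiL, hnorm, rfl⟩
    set b := (EuclideanSpace.basisFun (Fin n) ℝ).toBasis with hb
    set M : Fin k → Matrix (Fin n) (Fin n) ℝ := fun i => LinearMap.toMatrix b b (Li i) with hM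
    set a : Fin k → Fin n → ℝ := fun i j => ‖Li i (EuclideanSpace.single j 1)‖ with ha
    have ha_nonneg : ∀ i j, 0 ≤ a i j := fun i j => norm_nonneg _
    have hMa : ∀ i j, Real.sqrt (∑ p, M i p j ^ 2) = a i j := by
      intro i j
      have hcol : ∀ p, M i p j = Li i (EuclideanSpace.single j 1) p := by
        intro p
        simp only [hM]
        rw [LinearMap.toMatrix_apply]
        simp [hb]
      have hs : ∑ p, M i p j ^ 2 = ∑ p, (Li i (EuclideanSpace.single j 1) p) ^ 2 := by
        simp [hcol]
      rw [hs]
      simp only [ha]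
      rw [EuclideanSpace.norm_eq]
      congr 1
      refine Finset.sum_congr rfl fun p _ => ?_
      rw [Real.norm_eq_abs, sq_abs]
    have hconstraint : ∀ j, ∑ i, a i j ^ 2 ≤ 1 := by
      intro j
      have h1 : ‖L (EuclideanSpace.single j 1)‖ ^ 2 ≤ 1 := by
        have := hnorm j
        nlinarith [norm_nonneg (L (EuclideanSpace.single j 1))]
      rw [PiLp.norm_sq_eq_of_L2] at h1
      calc ∑ i, a i j ^ 2 = ∑ i, ‖L (EuclideanSpace.single j 1) i‖ ^ 2 :=
            Finset.sum_congr rfl fun i _ => by simp only [ha]; rw [hLiL]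
        _ ≤ 1 := h1
    have ha_le_one : ∀ i j, a i j ≤ 1 := by
      intro i j
      nlinarith [hconstraint j,
        Finset.single_le_sum (f := fun i => a i j ^ 2) (fun i _ => sq_nonneg _)
          (Finset.mem_univ i), ha_nonneg i j]
    set j0 : Fin n := ⟨0, by omega⟩ with hj0
    set j1 : Fin n := ⟨1, by omega⟩ with hj1
    have hj01 : j0 ≠ j1 := by simp [hj0, hj1, Fin.ext_iff]
    have hdet_le : ∀ i, LinearMap.det (Li i) ≤ a i j0 * a i j1 := by
      intro i
      have h1 : LinearMap.det (Li i) = (M i).det := (LinearMap.det_toMatrix b _).symm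
      have h2 : |(M i).det| ≤ ∏ j, Real.sqrt (∑ p, M i p j ^ 2) :=
        abs_det_le_prod_col_norms (M i)
      have h3 : (∏ j, a i j) ≤ a i j0 * a i j1 := by
        have hsub : ({j0, j1} : Finset (Fin n)) ⊆ Finset.univ := Finset.subset_univ _
        rw [← Finset.prod_sdiff hsub]
        have h4 : ∏ j ∈ Finset.univ \ {j0, j1}, a i j ≤ 1 :=
          Finset.prod_le_one (fun j _ => ha_nonneg i j) (fun j _ => ha_le_one i j)
        have h5 : ∏ j ∈ ({j0, j1} : Finset (Fin n)), a i j = a i j0 * a i j1 :=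
          Finset.prod_pair hj01
        calc (∏ j ∈ Finset.univ \ {j0, j1}, a i j) * ∏ j ∈ ({j0, j1} : Finset (Fin n)), a i j
            ≤ 1 * ∏ j ∈ ({j0, j1} : Finset (Fin n)), a i j :=
              mul_le_mul_of_nonneg_right h4 (Finset.prod_nonneg fun j _ => ha_nonneg i j)
          _ = a i j0 * a i j1 := by rw [one_mul, h5]
      calc LinearMap.det (Li i) ≤ |(M i).det| := h1 ▸ le_abs_self _
        _ ≤ ∏ j, Real.sqrt (∑ p, M i p j ^ 2) := h2
        _ = ∏ j, a i j := Finset.prod_congr rfl fun j _ => hMa i j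
        _ ≤ a i j0 * a i j1 := h3
    have hCS : ∑ i, a i j0 * a i j1 ≤ 1 := by
      have h := Finset.sum_mul_sq_le_sq_mul_sq Finset.univ (fun i => a i j0) (fun i => a i j1)
      have hs : (∑ i, a i j0 * a i j1) ^ 2 ≤ 1 := by
        calc (∑ i, a i j0 * a i j1) ^ 2 ≤ (∑ i, a i j0 ^ 2) * (∑ i, a i j1 ^ 2) := h
          _ ≤ 1 * 1 := mul_le_mul (hconstraint j0) (hconstraint j1)
              (Finset.sum_nonneg fun i _ => sq_nonneg _) zero_le_one
          _ = 1 := one_mul 1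
      nlinarith [Finset.sum_nonneg
        (fun i (_ : i ∈ Finset.univ) => mul_nonneg (ha_nonneg i j0) (ha_nonneg i j1))]
    calc ∑ i, LinearMap.det (Li i) ≤ ∑ i, a i j0 * a i j1 :=
          Finset.sum_le_sum fun i _ => hdet_le i
      _ ≤ 1 := hCS
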